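/- A nilpotent Lie algebra that is not graduable: let 𝔤 be a Lie algebra over ℝ with basis X₁, …, X₇ whose only non-trivial bracket relations among basis vectors (up to antisymmetry) are [X₁,Xⱼ] = X_{j+1} for j = 2, …, 6, [X₂,X₃] = X₆, and [X₂,X₄] = [X₅,X₂] = [X₃,X₄] = X₇. Then 𝔤 is nilpotent but admits no grading: there is no family of linear subspaces (V_s)_{s>0} of 𝔤, indexed by positive reals with all but finitely many equal to {0}, such that 𝔤 is the internal direct sum of the V_s and span{[v,w] : v ∈ V_s, w ∈ V_r} ⊆ V_{s+r} for all s, r > 0. -/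

import Mathlib

/-- The span of all brackets `⁅v, w⁆` with `v ∈ A` and `w ∈ B`. -/
def bracketSpan {𝔤 : Type*} [LieRing 𝔤] [LieAlgebra ℝ 𝔤] (A B : Submodule ℝ 𝔤) :
    Submodule ℝ 𝔤 :=
  Submodule.span ℝ {x : 𝔤 | ∃ v ∈ A, ∃ w ∈ B, ⁅v, w⁆ = x}


section Deriv
variable {𝔤 : Type*} [LieRing 𝔤] [LieAlgebra ℝ 𝔤]

lemma deriv_e6 (e : Module.Basis (Fin 7) ℝ 𝔤)
    (h12 : ⁅e 0, e 1⁆ = e 2) (h13 : ⁅e 0, e 2⁆ = e 3) (h14 : ⁅e 0, e 3⁆ = e 4)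
    (h15 : ⁅e 0, e 4⁆ = e 5) (h16 : ⁅e 0, e 5⁆ = e 6)
    (h23 : ⁅e 1, e 2⁆ = e 5) (h24 : ⁅e 1, e 3⁆ = e 6)
    (h52 : ⁅e 4, e 1⁆ = e 6) (h34 : ⁅e 2, e 3⁆ = e 6)
    (h17 : ⁅e 0, e 6⁆ = 0)
    (h26 : ⁅e 1, e 5⁆ = 0) (h27 : ⁅e 1, e 6⁆ = 0)
    (h35 : ⁅e 2, e 4⁆ = 0) (h36 : ⁅e 2, e 5⁆ = 0) (h37 : ⁅e 2, e 6⁆ = 0)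
    (h45 : ⁅e 3, e 4⁆ = 0) (h46 : ⁅e 3, e 5⁆ = 0) (h47 : ⁅e 3, e 6⁆ = 0)
    (h56 : ⁅e 4, e 5⁆ = 0) (h57 : ⁅e 4, e 6⁆ = 0) (h67 : ⁅e 5, e 6⁆ = 0)
    (D : 𝔤 →ₗ[ℝ] 𝔤) (hD : ∀ x y : 𝔤, D ⁅x, y⁆ = ⁅D x, y⁆ + ⁅x, D y⁆) :
    D (e 6) = 0 := by
  -- reversed bracket table
  have k10 : ⁅e 1, e 0⁆ = -e 2 := by rw [← lie_skew, h12]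
  have k20 : ⁅e 2, e 0⁆ = -e 3 := by rw [← lie_skew, h13]
  have k30 : ⁅e 3, e 0⁆ = -e 4 := by rw [← lie_skew, h14]
  have k40 : ⁅e 4, e 0⁆ = -e 5 := by rw [← lie_skew, h15]
  have k50 : ⁅e 5, e 0⁆ = -e 6 := by rw [← lie_skew, h16]
  have k60 : ⁅e 6, e 0⁆ = 0 := by rw [← lie_skew, h17, neg_zero]
  have k21 : ⁅e 2, e 1⁆ = -e 5 := by rw [← lie_skew, h23]
  have k31 : ⁅e 3, e 1⁆ = -e 6 := by rw [← lie_skew, h24]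
  have k14 : ⁅e 1, e 4⁆ = -e 6 := by rw [← lie_skew, h52]
  have k51 : ⁅e 5, e 1⁆ = 0 := by rw [← lie_skew, h26, neg_zero]
  have k61 : ⁅e 6, e 1⁆ = 0 := by rw [← lie_skew, h27, neg_zero]
  have k32 : ⁅e 3, e 2⁆ = -e 6 := by rw [← lie_skew, h34]
  have k42 : ⁅e 4, e 2⁆ = 0 := by rw [← lie_skew, h35, neg_zero]
  have k52 : ⁅e 5, e 2⁆ = 0 := by rw [← lie_skew, h36, neg_zero]
  have k62 : ⁅e 6, e 2⁆ = 0 := by rw [← lie_skew, h37, neg_zero]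
  have k43 : ⁅e 4, e 3⁆ = 0 := by rw [← lie_skew, h45, neg_zero]
  have k53 : ⁅e 5, e 3⁆ = 0 := by rw [← lie_skew, h46, neg_zero]
  have k63 : ⁅e 6, e 3⁆ = 0 := by rw [← lie_skew, h47, neg_zero]
  have k54 : ⁅e 5, e 4⁆ = 0 := by rw [← lie_skew, h56, neg_zero]
  have k64 : ⁅e 6, e 4⁆ = 0 := by rw [← lie_skew, h57, neg_zero]
  have k65 : ⁅e 6, e 5⁆ = 0 := by rw [← lie_skew, h67, neg_zero]
  set a : Fin 7 → ℝ := fun i => e.repr (D (e 0)) i with ha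
  set b : Fin 7 → ℝ := fun i => e.repr (D (e 1)) i with hb
  have hsum0 : D (e 0) = a 0 • e 0 + a 1 • e 1 + a 2 • e 2 + a 3 • e 3 + a 4 • e 4
      + a 5 • e 5 + a 6 • e 6 := by
    conv_lhs => rw [← e.sum_repr (D (e 0))]
    rw [Fin.sum_univ_seven]
  have hsum1 : D (e 1) = b 0 • e 0 + b 1 • e 1 + b 2 • e 2 + b 3 • e 3 + b 4 • e 4
      + b 5 • e 5 + b 6 • e 6 := by
    conv_lhs => rw [← e.sum_repr (D (e 1))]
    rw [Fin.sum_univ_seven]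
  have hD2 : D (e 2) = (a 0 + b 1) • e 2 + b 2 • e 3 + b 3 • e 4 + (b 4 - a 2) • e 5
      + (b 5 - a 3 + a 4) • e 6 := by
    have h := hD (e 0) (e 1); rw [h12] at h
    rw [h, hsum0, hsum1]
    simp only [add_lie, lie_add, smul_lie, lie_smul, lie_self, h12, h13, h14, h15, h16, h17,
      k10, k21, k31, h52, k51, k61, smul_zero, smul_neg]
    module
  have hD3 : D (e 3) = (2*a 0 + b 1) • e 3 + b 2 • e 4 + (a 1 + b 3) • e 5
      + (b 4 - a 2 - a 3) • e 6 := by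
    have h := hD (e 0) (e 2); rw [h13] at h
    rw [h, hsum0, hD2]
    simp only [add_lie, lie_add, smul_lie, lie_smul, lie_self, h13, h14, h15, h16, h17,
      k20, h23, k32, k42, k52, k62, smul_zero, smul_neg]
    module
  have hD4 : D (e 4) = (3*a 0 + b 1) • e 4 + b 2 • e 5 + (2*a 1 + a 2 + b 3) • e 6 := by
    have h := hD (e 0) (e 3); rw [h14] at h
    rw [h, hsum0, hD3]
    simp only [add_lie, lie_add, smul_lie, lie_smul, lie_self, h14, h15, h16, h17,
      k30, h24, h34, k43, k53, k63, smul_zero, smul_neg]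
    module
  have hD5 : D (e 5) = (4*a 0 + b 1) • e 5 + (b 2 - a 1) • e 6 := by
    have h := hD (e 0) (e 4); rw [h15] at h
    rw [h, hsum0, hD4]
    simp only [add_lie, lie_add, smul_lie, lie_smul, lie_self, h15, h16, h17,
      k40, k14, h35, h45, k54, k64, smul_zero, smul_neg]
    module
  have hD6 : D (e 6) = (5*a 0 + b 1) • e 6 := by
    have h := hD (e 0) (e 5); rw [h16] at h
    rw [h, hsum0, hD5]
    simp only [add_lie, lie_add, smul_lie, lie_smul, lie_self, h16, h17,
      k50, h26, h36, h46, h56, k65, smul_zero, smul_neg]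
    module
  have hR1 : D (e 5) = b 0 • e 3 + (a 0 + 2*b 1) • e 5 + (b 2 - 2*b 3) • e 6 := by
    have h := hD (e 1) (e 2); rw [h23] at h
    rw [h, hsum1, hD2]
    simp only [add_lie, lie_add, smul_lie, lie_smul, lie_self, h13, h23, k32, k42, k52, k62,
      h24, k14, h26, h27, smul_zero, smul_neg]
    module
  have hR3 : D (e 6) = (3*a 0 + 2*b 1) • e 6 - b 0 • e 5 := by
    have h := hD (e 4) (e 1); rw [h52] at h
    rw [h, hsum1, hD4]
    simp only [add_lie, lie_add, smul_lie, lie_smul, lie_self, h52, k51, k61,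
      k40, k42, k43, h56, h57, smul_zero, smul_neg]
    module
  -- extract coefficients
  have E1 := hD5.symm.trans hR1
  have E3 := hD6.symm.trans hR3
  have c3 : (0:ℝ) = b 0 := by
    have := congrArg (fun z => e.repr z 3) E1
    simpa [Module.Basis.repr_self_apply] using this
  have c5 : 4*a 0 + b 1 = a 0 + 2*b 1 := by
    have := congrArg (fun z => e.repr z 5) E1
    simpa [Module.Basis.repr_self_apply] using this
  have c6 : 5*a 0 + b 1 = 3*a 0 + 2*b 1 := by
    have := congrArg (fun z => e.repr z 6) E3
    simpa [Module.Basis.repr_self_apply, ← c3] using this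
  have ha0 : a 0 = 0 := by linarith
  have hb1 : b 1 = 0 := by linarith
  rw [hD6, ha0, hb1]
  norm_num
end Deriv

section Grad
open scoped DirectSum
variable {𝔤 : Type*} [LieRing 𝔤] [LieAlgebra ℝ 𝔤]

lemma grading_deriv (V : ℝ → Submodule ℝ 𝔤)
    (hbot : ∀ s : ℝ, s ≤ 0 → V s = ⊥)
    (hint : DirectSum.IsInternal V)
    (hgr : ∀ s r : ℝ, 0 < s → 0 < r → bracketSpan (V s) (V r) ≤ V (s + r)) :
    ∃ D : 𝔤 →ₗ[ℝ] 𝔤, Function.Injective D ∧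
      ∀ x y : 𝔤, D ⁅x, y⁆ = ⁅D x, y⁆ + ⁅x, D y⁆ := by
  classical
  set ψ := LinearEquiv.ofBijective (DirectSum.coeLinearMap V) hint with hψ
  set g : (⨁ (s : ℝ), V s) →ₗ[ℝ] (⨁ (s : ℝ), V s) :=
    DFinsupp.mapRange.linearMap (fun s : ℝ => (s : ℝ) • (LinearMap.id : V s →ₗ[ℝ] V s)) with hg
  set D : 𝔤 →ₗ[ℝ] 𝔤 :=
    (DirectSum.coeLinearMap V) ∘ₗ g ∘ₗ (ψ.symm : 𝔤 →ₗ[ℝ] _) with hD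
  have hginj : Function.Injective g := by
    intro c d hcd
    refine DFinsupp.ext fun s => ?_
    have h1 : g c s = g d s := by rw [hcd]
    have h2 : ∀ cc : ⨁ s : ℝ, V s, g cc s = s • cc s := fun cc => by
      rw [hg]; rfl
    rw [h2, h2] at h1
    rcases le_or_gt s 0 with hs | hs
    · have hb := hbot s hs
      have hc : (c s : 𝔤) = 0 := by simpa [hb] using (c s).2
      have hd : (d s : 𝔤) = 0 := by simpa [hb] using (d s).2
      exact Subtype.ext (by rw [hc, hd])
    · have := smul_right_injective (V s) (ne_of_gt hs) h1
      exact this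
  have hDmem : ∀ (s : ℝ) (v : 𝔤), v ∈ V s → D v = s • v := by
    intro s v hv
    have h1 : ψ.symm v = DirectSum.lof ℝ ℝ (fun s => V s) s ⟨v, hv⟩ := by
      apply ψ.injective
      rw [LinearEquiv.apply_symm_apply, hψ]
      show v = DirectSum.coeLinearMap V _
      rw [DirectSum.lof_eq_of, DirectSum.coeLinearMap_of]
    have h2 : g (DirectSum.lof ℝ ℝ (fun s => V s) s ⟨v, hv⟩)
        = DirectSum.lof ℝ ℝ (fun s => V s) s (s • ⟨v, hv⟩) := by
      rw [hg]
      exact DFinsupp.mapRange_single (f := fun (s : ℝ) x => ((s : ℝ) • (LinearMap.id : V s →ₗ[ℝ] V s)) x)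
        (hf := fun s => by simp)
    show DirectSum.coeLinearMap V (g (ψ.symm v)) = s • v
    rw [h1, h2, DirectSum.lof_eq_of, DirectSum.coeLinearMap_of]
    rfl
  have hinj : Function.Injective D := by
    have h1 : Function.Injective (DirectSum.coeLinearMap V) := hint.injective
    exact h1.comp (hginj.comp ψ.symm.injective)
  refine ⟨D, hinj, ?_⟩
  have htop : ∀ x : 𝔤, x ∈ ⨆ s, V s := by
    rw [hint.submodule_iSup_eq_top]; intro x; trivial
  have hhom : ∀ (s r : ℝ) (v w : 𝔤), v ∈ V s → w ∈ V r →
      D ⁅v, w⁆ = ⁅D v, w⁆ + ⁅v, D w⁆ := by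
    intro s r v w hv hw
    rcases le_or_gt s 0 with hs | hs
    · have : v = 0 := by rw [hbot s hs, Submodule.mem_bot] at hv; exact hv
      simp [this]
    rcases le_or_gt r 0 with hr | hr
    · have : w = 0 := by rw [hbot r hr, Submodule.mem_bot] at hw; exact hw
      simp [this]
    have hvw : ⁅v, w⁆ ∈ V (s + r) :=
      hgr s r hs hr (Submodule.subset_span ⟨v, hv, w, hw, rfl⟩)
    rw [hDmem _ _ hvw, hDmem _ _ hv, hDmem _ _ hw, smul_lie, lie_smul, ← add_smul]
  have step1 : ∀ (s : ℝ) (v : 𝔤), v ∈ V s → ∀ y : 𝔤,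
      D ⁅v, y⁆ = ⁅D v, y⁆ + ⁅v, D y⁆ := by
    intro s v hv y
    refine Submodule.iSup_induction V (motive := fun y => D ⁅v, y⁆ = ⁅D v, y⁆ + ⁅v, D y⁆)
      (htop y) (fun r w hw => hhom s r v w hv hw) (by simp) ?_
    intro y1 y2 hy1 hy2
    rw [lie_add, map_add, hy1, hy2, lie_add, map_add, lie_add]
    abel
  intro x y
  refine Submodule.iSup_induction V (motive := fun x => D ⁅x, y⁆ = ⁅D x, y⁆ + ⁅x, D y⁆)
    (htop x) (fun s v hv => step1 s v hv y) (by simp) ?_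
  intro x1 x2 hx1 hx2
  rw [add_lie, map_add, hx1, hx2, map_add, add_lie, add_lie]
  abel
end Grad

section Nilp
variable {𝔤 : Type*} [LieRing 𝔤] [LieAlgebra ℝ 𝔤]

lemma nilp7 (e : Module.Basis (Fin 7) ℝ 𝔤)
    (h12 : ⁅e 0, e 1⁆ = e 2) (h13 : ⁅e 0, e 2⁆ = e 3) (h14 : ⁅e 0, e 3⁆ = e 4)
    (h15 : ⁅e 0, e 4⁆ = e 5) (h16 : ⁅e 0, e 5⁆ = e 6)
    (h23 : ⁅e 1, e 2⁆ = e 5) (h24 : ⁅e 1, e 3⁆ = e 6)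
    (h52 : ⁅e 4, e 1⁆ = e 6) (h34 : ⁅e 2, e 3⁆ = e 6)
    (h17 : ⁅e 0, e 6⁆ = 0)
    (h26 : ⁅e 1, e 5⁆ = 0) (h27 : ⁅e 1, e 6⁆ = 0)
    (h35 : ⁅e 2, e 4⁆ = 0) (h36 : ⁅e 2, e 5⁆ = 0) (h37 : ⁅e 2, e 6⁆ = 0)
    (h45 : ⁅e 3, e 4⁆ = 0) (h46 : ⁅e 3, e 5⁆ = 0) (h47 : ⁅e 3, e 6⁆ = 0)
    (h56 : ⁅e 4, e 5⁆ = 0) (h57 : ⁅e 4, e 6⁆ = 0) (h67 : ⁅e 5, e 6⁆ = 0) :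
    LieRing.IsNilpotent 𝔤 := by
  have k10 : ⁅e 1, e 0⁆ = -e 2 := by rw [← lie_skew, h12]
  have k20 : ⁅e 2, e 0⁆ = -e 3 := by rw [← lie_skew, h13]
  have k30 : ⁅e 3, e 0⁆ = -e 4 := by rw [← lie_skew, h14]
  have k40 : ⁅e 4, e 0⁆ = -e 5 := by rw [← lie_skew, h15]
  have k50 : ⁅e 5, e 0⁆ = -e 6 := by rw [← lie_skew, h16]
  have k60 : ⁅e 6, e 0⁆ = 0 := by rw [← lie_skew, h17, neg_zero]
  have k21 : ⁅e 2, e 1⁆ = -e 5 := by rw [← lie_skew, h23]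
  have k31 : ⁅e 3, e 1⁆ = -e 6 := by rw [← lie_skew, h24]
  have k14 : ⁅e 1, e 4⁆ = -e 6 := by rw [← lie_skew, h52]
  have k51 : ⁅e 5, e 1⁆ = 0 := by rw [← lie_skew, h26, neg_zero]
  have k61 : ⁅e 6, e 1⁆ = 0 := by rw [← lie_skew, h27, neg_zero]
  have k32 : ⁅e 3, e 2⁆ = -e 6 := by rw [← lie_skew, h34]
  have k42 : ⁅e 4, e 2⁆ = 0 := by rw [← lie_skew, h35, neg_zero]
  have k52 : ⁅e 5, e 2⁆ = 0 := by rw [← lie_skew, h36, neg_zero]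
  have k62 : ⁅e 6, e 2⁆ = 0 := by rw [← lie_skew, h37, neg_zero]
  have k43 : ⁅e 4, e 3⁆ = 0 := by rw [← lie_skew, h45, neg_zero]
  have k53 : ⁅e 5, e 3⁆ = 0 := by rw [← lie_skew, h46, neg_zero]
  have k63 : ⁅e 6, e 3⁆ = 0 := by rw [← lie_skew, h47, neg_zero]
  have k54 : ⁅e 5, e 4⁆ = 0 := by rw [← lie_skew, h56, neg_zero]
  have k64 : ⁅e 6, e 4⁆ = 0 := by rw [← lie_skew, h57, neg_zero]
  have k65 : ⁅e 6, e 5⁆ = 0 := by rw [← lie_skew, h67, neg_zero]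
  set W : ℕ → Submodule ℝ 𝔤 :=
    fun k => Submodule.span ℝ (e '' {i : Fin 7 | k ≤ (i : ℕ) + 1}) with hW
  have hmem : ∀ (k : Fin 7) (n : ℕ), n ≤ (k : ℕ) + 1 → e k ∈ W n := fun k n hn =>
    Submodule.subset_span ⟨k, hn, rfl⟩
  have E2 : (⟨2, by norm_num⟩ : Fin 7) = 2 := rfl
  have E3 : (⟨3, by norm_num⟩ : Fin 7) = 3 := rfl
  have E4 : (⟨4, by norm_num⟩ : Fin 7) = 4 := rfl
  have E5 : (⟨5, by norm_num⟩ : Fin 7) = 5 := rfl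
  have E6 : (⟨6, by norm_num⟩ : Fin 7) = 6 := rfl
  have hbr : ∀ (i j : Fin 7) (n : ℕ), n ≤ (i : ℕ) + (j : ℕ) + 2 → ⁅e i, e j⁆ ∈ W n := by
    intro i j n hn
    fin_cases i <;> fin_cases j <;>
      simp only [Fin.isValue, Fin.val_zero, Fin.val_one, Fin.mk_zero, Fin.mk_one,
        E2, E3, E4, E5, E6] at hn ⊢ <;>
        first
          | (rw [lie_self]; exact zero_mem _)
          | (rw [h12]; exact hmem 2 n (by omega))
          | (rw [h13]; exact hmem 3 n (by omega))
          | (rw [h14]; exact hmem 4 n (by omega))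
          | (rw [h15]; exact hmem 5 n (by omega))
          | (rw [h16]; exact hmem 6 n (by omega))
          | (rw [h17]; exact zero_mem _)
          | (rw [h23]; exact hmem 5 n (by omega))
          | (rw [h24]; exact hmem 6 n (by omega))
          | (rw [h52]; exact hmem 6 n (by omega))
          | (rw [h34]; exact hmem 6 n (by omega))
          | (rw [h26]; exact zero_mem _)
          | (rw [h27]; exact zero_mem _)
          | (rw [h35]; exact zero_mem _)
          | (rw [h36]; exact zero_mem _)
          | (rw [h37]; exact zero_mem _)
          | (rw [h45]; exact zero_mem _)
          | (rw [h46]; exact zero_mem _)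
          | (rw [h47]; exact zero_mem _)
          | (rw [h56]; exact zero_mem _)
          | (rw [h57]; exact zero_mem _)
          | (rw [h67]; exact zero_mem _)
          | (rw [k10]; exact neg_mem (hmem 2 n (by omega)))
          | (rw [k20]; exact neg_mem (hmem 3 n (by omega)))
          | (rw [k30]; exact neg_mem (hmem 4 n (by omega)))
          | (rw [k40]; exact neg_mem (hmem 5 n (by omega)))
          | (rw [k50]; exact neg_mem (hmem 6 n (by omega)))
          | (rw [k60]; exact zero_mem _)
          | (rw [k21]; exact neg_mem (hmem 5 n (by omega)))
          | (rw [k31]; exact neg_mem (hmem 6 n (by omega)))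
          | (rw [k14]; exact neg_mem (hmem 6 n (by omega)))
          | (rw [k51]; exact zero_mem _)
          | (rw [k61]; exact zero_mem _)
          | (rw [k32]; exact neg_mem (hmem 6 n (by omega)))
          | (rw [k42]; exact zero_mem _)
          | (rw [k52]; exact zero_mem _)
          | (rw [k62]; exact zero_mem _)
          | (rw [k43]; exact zero_mem _)
          | (rw [k53]; exact zero_mem _)
          | (rw [k63]; exact zero_mem _)
          | (rw [k54]; exact zero_mem _)
          | (rw [k64]; exact zero_mem _)
          | (rw [k65]; exact zero_mem _)
  have hWbr : ∀ (s r : ℕ) (x : 𝔤), x ∈ W s → ∀ y ∈ W r, ⁅x, y⁆ ∈ W (s + r) := by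
    intro s r x hx
    refine Submodule.span_induction
      (p := fun x _ => ∀ y ∈ W r, ⁅x, y⁆ ∈ W (s + r)) ?_ ?_ ?_ ?_ hx
    · rintro _ ⟨i, hi, rfl⟩ y hy
      refine Submodule.span_induction
        (p := fun y _ => ⁅e i, y⁆ ∈ W (s + r)) ?_ ?_ ?_ ?_ hy
      · rintro _ ⟨j, hj, rfl⟩
        exact hbr i j (s + r) (by simp only [Set.mem_setOf_eq] at hi hj; omega)
      · simp
      · intro y1 y2 _ _ hy1 hy2; rw [lie_add]; exact add_mem hy1 hy2
      · intro t y _ hy; rw [lie_smul]; exact Submodule.smul_mem _ t hy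
    · intro y _; simp
    · intro x1 x2 _ _ hx1 hx2 y hy; rw [add_lie]; exact add_mem (hx1 y hy) (hx2 y hy)
    · intro t x _ hx y hy; rw [smul_lie]; exact Submodule.smul_mem _ t (hx y hy)
  have hW1 : W 1 = ⊤ := by
    have h1 : {i : Fin 7 | 1 ≤ (i : ℕ) + 1} = Set.univ := by ext i; simp
    simp only [hW, h1, Set.image_univ]
    exact e.span_eq
  have hW8 : W 8 = ⊥ := by
    have h8 : {i : Fin 7 | 8 ≤ (i : ℕ) + 1} = ∅ := by
      ext i
      simp only [Set.mem_setOf_eq, Set.mem_empty_iff_false, iff_false, not_le]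
      omega
    simp only [hW, h8, Set.image_empty, Submodule.span_empty]
  have hlcs : ∀ (k : ℕ) (m : 𝔤), m ∈ LieModule.lowerCentralSeries ℝ 𝔤 𝔤 k → m ∈ W (k + 1) := by
    intro k
    induction k with
    | zero => intro m _; rw [hW1]; trivial
    | succ k ih =>
      intro m hm
      rw [LieModule.lowerCentralSeries_succ, ← LieSubmodule.mem_toSubmodule,
        LieSubmodule.lieIdeal_oper_eq_linear_span'] at hm
      have hle : Submodule.span ℝ {m : 𝔤 | ∃ x ∈ (⊤ : LieIdeal ℝ 𝔤),
          ∃ n ∈ LieModule.lowerCentralSeries ℝ 𝔤 𝔤 k, ⁅x, n⁆ = m} ≤ W (k + 1 + 1) := by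
        rw [Submodule.span_le]
        rintro _ ⟨x, -, z, hz, rfl⟩
        have hx : x ∈ W 1 := hW1 ▸ Submodule.mem_top
        have hz' : z ∈ W (k + 1) := ih z hz
        have := hWbr 1 (k + 1) x hx z hz'
        simpa [Nat.add_comm, Nat.add_assoc, Nat.add_left_comm] using this
      exact hle hm
  rw [LieRing.IsNilpotent, LieModule.isNilpotent_iff ℝ]
  refine ⟨7, ?_⟩
  rw [LieSubmodule.eq_bot_iff]
  intro m hm
  have := hlcs 7 m hm
  rw [hW8] at this
  simpa using this
end Nilp

/-- **A nilpotent Lie algebra that is not graduable:** the 7-dimensional Lie algebra with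
basis `X₁, …, X₇` (here `X i = e (i-1)`) whose only non-trivial brackets are
`[X₁,Xⱼ] = X_{j+1}` for `j = 2, …, 6`, `[X₂,X₃] = X₆`, and
`[X₂,X₄] = [X₅,X₂] = [X₃,X₄] = X₇` is nilpotent but admits no grading by positive reals. -/
theorem nilpotent_not_graduable_dim7 (𝔤 : Type*) [LieRing 𝔤] [LieAlgebra ℝ 𝔤]
    (e : Module.Basis (Fin 7) ℝ 𝔤)
    (h12 : ⁅e 0, e 1⁆ = e 2) (h13 : ⁅e 0, e 2⁆ = e 3) (h14 : ⁅e 0, e 3⁆ = e 4)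
    (h15 : ⁅e 0, e 4⁆ = e 5) (h16 : ⁅e 0, e 5⁆ = e 6)
    (h23 : ⁅e 1, e 2⁆ = e 5) (h24 : ⁅e 1, e 3⁆ = e 6)
    (h52 : ⁅e 4, e 1⁆ = e 6) (h34 : ⁅e 2, e 3⁆ = e 6)
    (h17 : ⁅e 0, e 6⁆ = 0)
    (h26 : ⁅e 1, e 5⁆ = 0) (h27 : ⁅e 1, e 6⁆ = 0)
    (h35 : ⁅e 2, e 4⁆ = 0) (h36 : ⁅e 2, e 5⁆ = 0) (h37 : ⁅e 2, e 6⁆ = 0)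
    (h45 : ⁅e 3, e 4⁆ = 0) (h46 : ⁅e 3, e 5⁆ = 0) (h47 : ⁅e 3, e 6⁆ = 0)
    (h56 : ⁅e 4, e 5⁆ = 0) (h57 : ⁅e 4, e 6⁆ = 0) (h67 : ⁅e 5, e 6⁆ = 0) :
    LieRing.IsNilpotent 𝔤 ∧
    ¬ ∃ V : ℝ → Submodule ℝ 𝔤,
        (∀ s : ℝ, s ≤ 0 → V s = ⊥) ∧
        {s : ℝ | V s ≠ ⊥}.Finite ∧
        DirectSum.IsInternal V ∧
        (∀ s r : ℝ, 0 < s → 0 < r → bracketSpan (V s) (V r) ≤ V (s + r)) := by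
  constructor
  · exact nilp7 e h12 h13 h14 h15 h16 h23 h24 h52 h34 h17 h26 h27 h35 h36 h37 h45 h46 h47
      h56 h57 h67
  · rintro ⟨V, hbot, -, hint, hgr⟩
    obtain ⟨D, hinj, hLeib⟩ := grading_deriv V hbot hint hgr
    have h0 : D (e 6) = 0 := deriv_e6 e h12 h13 h14 h15 h16 h23 h24 h52 h34 h17 h26 h27 h35
      h36 h37 h45 h46 h47 h56 h57 h67 D hLeib
    have : e 6 = 0 := hinj (by rw [h0, map_zero])
    exact e.ne_zero 6 this
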